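/- Assume Axioms (1)-(12) hold for L, L_epsilon, and the family (L_x), and let phi_x : X -> X (for x in A) be the unique bijections satisfying phi_x([u]) = [v] if and only if (u, v) in L_x. Then the subgroup H of the symmetric group of X generated by {phi_x : x in A} acts transitively on X: for all u, v in L there exists h in H with h([u]) = [v]. -/
import Mathlib


/-- The set `X = L/∼` of equivalence classes of words of `L` under the relation
`u ∼ v ↔ (u, v) ∈ L_ε` (under Axioms (3)–(5) this relation is an equivalence
relation, and then the quotient `Quot` coincides with the usual quotient). -/
def ClassesOf {A : Type} (L : Set (List A)) (Leps : Set (List A × List A)) : Type :=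
  Quot fun u v : { w : List A // w ∈ L } => ((u : List A), (v : List A)) ∈ Leps

/-- The equivalence class `[u] ∈ X` of a word `u ∈ L`. -/
def cls {A : Type} (L : Set (List A)) (Leps : Set (List A × List A))
    (u : { w : List A // w ∈ L }) : ClassesOf L Leps :=
  Quot.mk _ u

/-- `PhiRel Lx u w z` formalizes the statement `[u] φ_w = [z]`: for a word
`w = σ₁ ⋯ σ_k` over `A` it asserts the existence of intermediate words
`v₁, …, v_{k-1}` with `(u, v₁) ∈ L_{σ₁}`, `(v₁, v₂) ∈ L_{σ₂}`, …,
`(v_{k-1}, z') ∈ L_{σ_k}` and `[z'] = [z]` (for the empty word it asserts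
`[u] = [z]`, i.e. `(u, z) ∈ L_ε`). -/
def PhiRel {A : Type} (Lx : Option A → Set (List A × List A)) :
    List A → List A → List A → Prop
  | u, [], z => (u, z) ∈ Lx none
  | u, x :: w, z => ∃ v, (u, v) ∈ Lx (some x) ∧ PhiRel Lx v w z

/-- Assuming Axioms (1)–(12), the subgroup `H` of the symmetric group of
`X = L/∼` generated by the bijections `φ_x` (given here as permutations `φ x`
characterized by `φ x [u] = [v] ↔ (u, v) ∈ L_x`) acts transitively on `X`:
for all `u, v ∈ L` there is `h ∈ H` with `h [u] = [v]`. -/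
theorem multiplier_group_acts_transitively {A : Type} [Fintype A]
    (L : Set (List A)) (Lx : Option A → Set (List A × List A))
    (ax1 : L.Nonempty)
    (ax2 : ∀ x : Option A, ∀ p ∈ Lx x, p.1 ∈ L ∧ p.2 ∈ L)
    (ax3 : ∀ w ∈ L, (w, w) ∈ Lx none)
    (ax4 : ∀ u v : List A, (u, v) ∈ Lx none → (v, u) ∈ Lx none)
    (ax5 : ∀ u v w : List A, (u, v) ∈ Lx none → (v, w) ∈ Lx none → (u, w) ∈ Lx none)
    (ax6 : ∀ x : A, ∀ u ∈ L, ∃ v, (u, v) ∈ Lx (some x))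
    (ax7 : ∀ x : A, ∀ u v w : List A,
      (u, v) ∈ Lx (some x) → (v, w) ∈ Lx none → (u, w) ∈ Lx (some x))
    (ax8 : ∀ x : A, ∀ u v w : List A,
      (u, v) ∈ Lx none → (u, w) ∈ Lx (some x) → (v, w) ∈ Lx (some x))
    (ax9 : ∀ x : A, ∀ v ∈ L, ∃ u, (u, v) ∈ Lx (some x))
    (ax10 : ∀ x : A, ∀ u v w : List A,
      (u, v) ∈ Lx (some x) → (u, w) ∈ Lx none → (w, v) ∈ Lx (some x))
    (ax11 : ∀ x : A, ∀ u v w : List A,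
      (u, v) ∈ Lx none → (w, u) ∈ Lx (some x) → (w, v) ∈ Lx (some x))
    (ax12 : ∀ u w w' : List A, u ++ w ∈ L → u ++ w' ∈ L →
      ∀ v ∈ L, (PhiRel Lx v w (u ++ w) ↔ PhiRel Lx v w' (u ++ w')))
    (φ : A → Equiv.Perm (ClassesOf L (Lx none)))
    (hφ : ∀ x : A, ∀ u v : { w : List A // w ∈ L },
      (φ x (cls L (Lx none) u) = cls L (Lx none) v ↔
        ((u : List A), (v : List A)) ∈ Lx (some x))) :
    ∀ u v : { w : List A // w ∈ L },
      ∃ h ∈ Subgroup.closure (Set.range φ),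
        h (cls L (Lx none) u) = cls L (Lx none) v := by
  have back : ∀ w : List A, ∀ z ∈ L, ∃ t ∈ L, PhiRel Lx t w z := by
    intro w
    induction w with
    | nil => intro z hz; exact ⟨z, hz, ax3 z hz⟩
    | cons x w ih =>
      intro z hz
      obtain ⟨t', ht'L, ht'⟩ := ih z hz
      obtain ⟨t, ht⟩ := ax9 x t' ht'L
      exact ⟨t, (ax2 _ _ ht).1, t', ht, ht'⟩
  have fwd : ∀ w : List A, ∀ t z : {w : List A // w ∈ L}, PhiRel Lx t.1 w z.1 →
      ∃ h ∈ Subgroup.closure (Set.range φ),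
        h (cls L (Lx none) t) = cls L (Lx none) z := by
    intro w
    induction w with
    | nil =>
      intro t z h
      exact ⟨1, one_mem _, Quot.sound h⟩
    | cons x w ih =>
      intro t z h
      obtain ⟨v, hv1, hv2⟩ := h
      have hvL : v ∈ L := (ax2 _ _ hv1).2
      obtain ⟨g, hg, hgz⟩ := ih ⟨v, hvL⟩ z hv2
      refine ⟨g * φ x, mul_mem hg (Subgroup.subset_closure ⟨x, rfl⟩), ?_⟩
      have hx := (hφ x t ⟨v, hvL⟩).2 hv1
      simp [Equiv.Perm.mul_apply, hx, hgz]
  intro u v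
  obtain ⟨t, htL, ht⟩ := back u.1 u.1 u.2
  have ht' : PhiRel Lx t v.1 v.1 := by
    have h12 := ax12 [] u.1 v.1 (by simpa using u.2) (by simpa using v.2) t htL
    simpa using h12.1 (by simpa using ht)
  obtain ⟨h1, hh1, hh1e⟩ := fwd u.1 ⟨t, htL⟩ u ht
  obtain ⟨h2, hh2, hh2e⟩ := fwd v.1 ⟨t, htL⟩ v ht'
  refine ⟨h2 * h1⁻¹, mul_mem hh2 (inv_mem hh1), ?_⟩
  have hinv : h1⁻¹ (cls L (Lx none) u) = cls L (Lx none) ⟨t, htL⟩ := by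
    rw [← hh1e]; simp
  simp [Equiv.Perm.mul_apply, hinv, hh2e]
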